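/- Let G be a connected finite simple graph with δ̂-thin triangles (δ̂ ≥ 0). Then for all vertices a, b, c, d of G, d(a,b) + d(c,d) ≤ max(d(a,c) + d(b,d), d(a,d) + d(b,c)) + 4δ̂; that is, the graph distance satisfies the four-point condition with constant 2δ̂. -/

import Mathlib

noncomputable def gp {V : Type*} (G : SimpleGraph V) (r x y : V) : ℝ :=
  ((G.dist x r : ℝ) + (G.dist y r : ℝ) - (G.dist x y : ℝ)) / 2

def ThinTriangles {V : Type*} (G : SimpleGraph V) (δ : ℝ) : Prop :=
  ∀ x y z : V, ∀ p : G.Walk x y, ∀ q : G.Walk x z,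
    p.length = G.dist x y → q.length = G.dist x z →
    ∀ k : ℕ, (k : ℝ) ≤ gp G x y z →
      (G.dist (p.getVert k) (q.getVert k) : ℝ) ≤ δ

private lemma dist_getVert_le_left {V : Type*} {G : SimpleGraph V} (hconn : G.Connected) :
    ∀ {u v : V} (p : G.Walk u v) (k : ℕ), G.dist u (p.getVert k) ≤ k := by
  intro u v p
  induction p with
  | nil =>
    rename_i w
    intro k
    have h : (SimpleGraph.Walk.nil : G.Walk w w).getVert k = w := rfl
    simp [h, SimpleGraph.dist_self]
  | @cons u x v h q ih =>
    intro k
    cases k with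
    | zero => simp
    | succ k =>
      have h1 : G.dist u x ≤ 1 := by
        simpa using SimpleGraph.dist_le (SimpleGraph.Walk.cons h SimpleGraph.Walk.nil)
      calc G.dist u ((SimpleGraph.Walk.cons h q).getVert (k + 1))
          = G.dist u (q.getVert k) := by rw [SimpleGraph.Walk.getVert_cons_succ]
        _ ≤ G.dist u x + G.dist x (q.getVert k) := hconn.dist_triangle
        _ ≤ 1 + k := Nat.add_le_add h1 (ih k)
        _ = k + 1 := by omega

private lemma dist_getVert_le_right {V : Type*} {G : SimpleGraph V} :
    ∀ {u v : V} (p : G.Walk u v) (k : ℕ), G.dist (p.getVert k) v ≤ p.length - k := by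
  intro u v p
  induction p with
  | nil =>
    rename_i w
    intro k
    have h : (SimpleGraph.Walk.nil : G.Walk w w).getVert k = w := rfl
    simp [h, SimpleGraph.dist_self]
  | @cons u x v h q ih =>
    intro k
    cases k with
    | zero =>
      simpa using SimpleGraph.dist_le (SimpleGraph.Walk.cons h q)
    | succ k =>
      have h2 := ih k
      have h3 : ((SimpleGraph.Walk.cons h q).getVert (k + 1)) = q.getVert k :=
        SimpleGraph.Walk.getVert_cons_succ q h
      rw [h3]
      simpa using h2

private lemma geodesic_getVert {V : Type*} {G : SimpleGraph V} (hconn : G.Connected)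
    {u v : V} (p : G.Walk u v) (hp : p.length = G.dist u v) (k : ℕ) (hk : k ≤ p.length) :
    G.dist u (p.getVert k) = k ∧ G.dist (p.getVert k) v = p.length - k := by
  have h1 := dist_getVert_le_left hconn p k
  have h2 := dist_getVert_le_right p k
  have h3 : G.dist u v ≤ G.dist u (p.getVert k) + G.dist (p.getVert k) v :=
    hconn.dist_triangle
  omega

private lemma gp_ge {V : Type*} {G : SimpleGraph V} (r x y : V) (j : ℕ)
    (h : G.dist x y + 2 * j ≤ G.dist x r + G.dist y r) : (j : ℝ) ≤ gp G r x y := by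
  have h' := (Nat.cast_le (α := ℝ)).2 h
  push_cast at h'
  simp only [gp]
  linarith
private lemma claim_lemma {V : Type*} {G : SimpleGraph V} (hconn : G.Connected)
    (hstar : ∀ (r x y : V) (p : G.Walk r x) (q : G.Walk r y),
      p.length = G.dist r x → q.length = G.dist r y →
      ∀ j : ℕ, (j : ℝ) ≤ gp G r x y → p.getVert j = q.getVert j)
    (d x y : V) (k : ℕ)
    (px : G.Walk d x) (py : G.Walk d y) (g : G.Walk x y)
    (hpx : px.length = G.dist d x) (hpy : py.length = G.dist d y)
    (hg : g.length = G.dist x y)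
    (hodd : G.dist d x + G.dist d y = G.dist x y + 2 * k + 1) :
    g.getVert (G.dist d x - (k + 1)) = px.getVert (k + 1) ∧
    g.getVert (G.dist d x - k) = py.getVert (k + 1) := by
  have cYX : G.dist y x = G.dist x y := SimpleGraph.dist_comm
  have cXD : G.dist x d = G.dist d x := SimpleGraph.dist_comm
  have cYD : G.dist y d = G.dist d y := SimpleGraph.dist_comm
  have tx : G.dist d y ≤ G.dist d x + G.dist x y := hconn.dist_triangle
  have ty : G.dist d x ≤ G.dist d y + G.dist y x := hconn.dist_triangle
  have hdx : k + 1 ≤ G.dist d x := by omega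
  have hdy : k + 1 ≤ G.dist d y := by omega
  constructor
  · have h1 : g.getVert (G.dist d x - (k + 1)) = px.reverse.getVert (G.dist d x - (k + 1)) := by
      apply hstar x y d g px.reverse hg
      · rw [SimpleGraph.Walk.length_reverse, hpx, cXD]
      · apply gp_ge
        omega
    rw [h1, SimpleGraph.Walk.getVert_reverse, hpx]
    congr 1
    omega
  · have h2 : g.reverse.getVert (G.dist d y - (k + 1)) =
        py.reverse.getVert (G.dist d y - (k + 1)) := by
      apply hstar y x d g.reverse py.reverse
      · rw [SimpleGraph.Walk.length_reverse, hg, cYX]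
      · rw [SimpleGraph.Walk.length_reverse, hpy, cYD]
      · apply gp_ge
        omega
    rw [SimpleGraph.Walk.getVert_reverse, SimpleGraph.Walk.getVert_reverse, hg, hpy] at h2
    have e1 : G.dist x y - (G.dist d y - (k + 1)) = G.dist d x - k := by omega
    have e2 : G.dist d y - (G.dist d y - (k + 1)) = k + 1 := by omega
    rw [e1, e2] at h2
    exact h2

private lemma claim_dist_le_one {V : Type*} {G : SimpleGraph V} (hconn : G.Connected)
    (hstar : ∀ (r x y : V) (p : G.Walk r x) (q : G.Walk r y),
      p.length = G.dist r x → q.length = G.dist r y →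
      ∀ j : ℕ, (j : ℝ) ≤ gp G r x y → p.getVert j = q.getVert j)
    (d x y : V) (k : ℕ)
    (px : G.Walk d x) (py : G.Walk d y) (g : G.Walk x y)
    (hpx : px.length = G.dist d x) (hpy : py.length = G.dist d y)
    (hg : g.length = G.dist x y)
    (hodd : G.dist d x + G.dist d y = G.dist x y + 2 * k + 1) :
    G.dist (px.getVert (k + 1)) (py.getVert (k + 1)) ≤ 1 := by
  obtain ⟨h1, h2⟩ := claim_lemma hconn hstar d x y k px py g hpx hpy hg hodd
  have cYX : G.dist y x = G.dist x y := SimpleGraph.dist_comm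
  have tx : G.dist d y ≤ G.dist d x + G.dist x y := hconn.dist_triangle
  have ty : G.dist d x ≤ G.dist d y + G.dist y x := hconn.dist_triangle
  have hdx : k + 1 ≤ G.dist d x := by omega
  have hdy : k + 1 ≤ G.dist d y := by omega
  have hi : G.dist d x - (k + 1) < g.length := by rw [hg]; omega
  have hadj := g.adj_getVert_succ hi
  have hsucc : G.dist d x - (k + 1) + 1 = G.dist d x - k := by omega
  rw [hsucc] at hadj
  rw [← h1, ← h2]
  simpa using SimpleGraph.dist_le (SimpleGraph.Walk.cons hadj SimpleGraph.Walk.nil)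

private lemma main_lemma {V : Type*} {G : SimpleGraph V} (hconn : G.Connected)
    {δ : ℝ} (hδ : 0 ≤ δ) (hthin : ThinTriangles G δ) (a b c d : V)
    (hmin : G.dist d a + G.dist b c ≤ G.dist d b + G.dist a c) :
    (G.dist a b : ℝ) + (G.dist d c : ℝ) ≤ (G.dist a c : ℝ) + (G.dist d b : ℝ) + 4 * δ := by
  obtain ⟨p, hp⟩ := hconn.exists_walk_length_eq_dist d a
  obtain ⟨q, hq⟩ := hconn.exists_walk_length_eq_dist d b
  obtain ⟨r, hr⟩ := hconn.exists_walk_length_eq_dist d c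
  -- commutativity facts
  have cAD : G.dist a d = G.dist d a := SimpleGraph.dist_comm
  have cBD : G.dist b d = G.dist d b := SimpleGraph.dist_comm
  have cCD : G.dist c d = G.dist d c := SimpleGraph.dist_comm
  have cCA : G.dist c a = G.dist a c := SimpleGraph.dist_comm
  have cCB : G.dist c b = G.dist b c := SimpleGraph.dist_comm
  have cBA : G.dist b a = G.dist a b := SimpleGraph.dist_comm
  -- triangle facts
  have t1 : G.dist a c ≤ G.dist a d + G.dist d c := hconn.dist_triangle
  have t2 : G.dist d a ≤ G.dist d c + G.dist c a := hconn.dist_triangle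
  have t3 : G.dist d c ≤ G.dist d a + G.dist a c := hconn.dist_triangle
  have t4 : G.dist b c ≤ G.dist b d + G.dist d c := hconn.dist_triangle
  have t5 : G.dist d b ≤ G.dist d c + G.dist c b := hconn.dist_triangle
  have t6 : G.dist d c ≤ G.dist d b + G.dist b c := hconn.dist_triangle
  obtain ⟨k, hk⟩ : ∃ k, G.dist d a + G.dist d c = G.dist a c + 2 * k ∨
      G.dist d a + G.dist d c = G.dist a c + 2 * k + 1 :=
    ⟨(G.dist d a + G.dist d c - G.dist a c) / 2, by omega⟩
  have hkA : k ≤ G.dist d a := by omega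
  have hkC : k ≤ G.dist d c := by omega
  have hkB : k ≤ G.dist d b := by omega
  -- exact distances along geodesics
  have gpkA := geodesic_getVert hconn p hp k (by omega)
  have gqkB := geodesic_getVert hconn q hq k (by omega)
  -- the basic thin-triangles bound:  AB ≤ (A - k) + (B - k) + 2δ
  have d1 : (G.dist (p.getVert k) (r.getVert k) : ℝ) ≤ δ := by
    apply hthin d a c p r hp hr k
    apply gp_ge
    omega
  have d2 : (G.dist (r.getVert k) (q.getVert k) : ℝ) ≤ δ := by
    apply hthin d c b r q hr hq k
    apply gp_ge
    omega
  have s1 : G.dist a b ≤ G.dist a (p.getVert k) + G.dist (p.getVert k) b :=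
    hconn.dist_triangle
  have s2 : G.dist (p.getVert k) b ≤
      G.dist (p.getVert k) (r.getVert k) + G.dist (r.getVert k) b := hconn.dist_triangle
  have s3 : G.dist (r.getVert k) b ≤
      G.dist (r.getVert k) (q.getVert k) + G.dist (q.getVert k) b := hconn.dist_triangle
  have e1 : G.dist a (p.getVert k) + k = G.dist d a := by
    have := gpkA.2
    have hc : G.dist a (p.getVert k) = G.dist (p.getVert k) a := SimpleGraph.dist_comm
    omega
  have e2 : G.dist (q.getVert k) b + k = G.dist d b := by
    have := gqkB.2
    omega
  have R1 : (G.dist a b : ℝ) + 2 * k ≤ (G.dist d a : ℝ) + (G.dist d b : ℝ) + 2 * δ := by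
    have s1' := (Nat.cast_le (α := ℝ)).2 s1
    have s2' := (Nat.cast_le (α := ℝ)).2 s2
    have s3' := (Nat.cast_le (α := ℝ)).2 s3
    have e1' := congrArg (Nat.cast : ℕ → ℝ) e1
    have e2' := congrArg (Nat.cast : ℕ → ℝ) e2
    push_cast at s1' s2' s3' e1' e2'
    linarith
  rcases hk with hke | hko
  · -- even case
    have hke' := congrArg (Nat.cast : ℕ → ℝ) hke
    push_cast at hke'
    linarith
  · -- odd case
    have hko' := congrArg (Nat.cast : ℕ → ℝ) hko
    push_cast at hko'
    by_cases hδ4 : (1 : ℝ) / 4 ≤ δ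
    · -- integrality argument
      by_cases hδ2 : (1 : ℝ) / 2 ≤ δ
      · linarith
      · have hlt : (G.dist a b : ℝ) + (G.dist d c : ℝ) <
            (G.dist a c : ℝ) + (G.dist d b : ℝ) + 2 := by linarith
        have hnat : G.dist a b + G.dist d c < G.dist a c + G.dist d b + 2 := by
          exact_mod_cast hlt
        have hnat' : G.dist a b + G.dist d c ≤ G.dist a c + G.dist d b + 1 := by omega
        have := (Nat.cast_le (α := ℝ)).2 hnat'
        push_cast at this
        linarith
    · -- δ < 1/4 : the exact (tree-like) argument
      push_neg at hδ4
      have hstar : ∀ (r' x y : V) (p' : G.Walk r' x) (q' : G.Walk r' y),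
          p'.length = G.dist r' x → q'.length = G.dist r' y →
          ∀ j : ℕ, (j : ℝ) ≤ gp G r' x y → p'.getVert j = q'.getVert j := by
        intro r' x y p' q' hp' hq' j hj
        have hth := hthin r' x y p' q' hp' hq' j hj
        have hz : G.dist (p'.getVert j) (q'.getVert j) = 0 := by
          by_contra hne
          have h1 : 1 ≤ G.dist (p'.getVert j) (q'.getVert j) := Nat.one_le_iff_ne_zero.2 hne
          have h1' := (Nat.one_le_cast (α := ℝ)).2 h1
          linarith
        exact (hconn.dist_eq_zero_iff).1 hz
      obtain ⟨ga, hga⟩ := hconn.exists_walk_length_eq_dist a c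
      by_cases hcase : G.dist b c + 2 * k + 2 ≤ G.dist d b + G.dist d c
      · -- n₂ ≥ 2k+2 : r and q agree up to k+1, p and r are within 1 at k+1
        have hrq : r.getVert (k + 1) = q.getVert (k + 1) := by
          apply hstar d c b r q hr hq (k + 1)
          apply gp_ge
          omega
        have hd1 : G.dist (p.getVert (k + 1)) (r.getVert (k + 1)) ≤ 1 :=
          claim_dist_le_one hconn hstar d a c k p r ga hp hr hga (by omega)
        have gpk1 := geodesic_getVert hconn p hp (k + 1) (by omega)
        have gqk1 := geodesic_getVert hconn q hq (k + 1) (by omega)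
        have u1 : G.dist a b ≤ G.dist a (p.getVert (k + 1)) + G.dist (p.getVert (k + 1)) b :=
          hconn.dist_triangle
        have u2 : G.dist (p.getVert (k + 1)) b ≤
            G.dist (p.getVert (k + 1)) (r.getVert (k + 1)) + G.dist (r.getVert (k + 1)) b :=
          hconn.dist_triangle
        have u3 : G.dist (r.getVert (k + 1)) b = G.dist (q.getVert (k + 1)) b := by rw [hrq]
        have f1 : G.dist a (p.getVert (k + 1)) + (k + 1) = G.dist d a := by
          have := gpk1.2
          have hc : G.dist a (p.getVert (k + 1)) = G.dist (p.getVert (k + 1)) a :=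
            SimpleGraph.dist_comm
          omega
        have f2 : G.dist (q.getVert (k + 1)) b + (k + 1) = G.dist d b := by
          have := gqk1.2
          omega
        have hfin : G.dist a b + G.dist d c ≤ G.dist a c + G.dist d b := by omega
        have := (Nat.cast_le (α := ℝ)).2 hfin
        push_cast at this
        linarith
      · -- n₂ = 2k+1
        have hBC : G.dist d b + G.dist d c = G.dist b c + 2 * k + 1 := by omega
        have hpr : p.getVert k = r.getVert k := by
          apply hstar d a c p r hp hr k
          apply gp_ge
          omega
        have hrq : r.getVert k = q.getVert k := by
          apply hstar d c b r q hr hq k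
          apply gp_ge
          omega
        have s1'' : G.dist a b ≤ G.dist a (p.getVert k) + G.dist (q.getVert k) b := by
          calc G.dist a b ≤ G.dist a (p.getVert k) + G.dist (p.getVert k) b :=
                hconn.dist_triangle
            _ = G.dist a (p.getVert k) + G.dist (q.getVert k) b := by rw [hpr, hrq]
        have hub : G.dist a b + 2 * k ≤ G.dist d a + G.dist d b := by omega
        by_cases hfin : G.dist a b + 2 * k + 1 ≤ G.dist d a + G.dist d b
        · have hfin' : G.dist a b + G.dist d c ≤ G.dist a c + G.dist d b := by omega
          have := (Nat.cast_le (α := ℝ)).2 hfin'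
          push_cast at this
          linarith
        · -- AB = A + B - 2k : derive a contradiction
          exfalso
          have hABeq : G.dist a b + 2 * k = G.dist d a + G.dist d b := by omega
          obtain ⟨g, hg⟩ := hconn.exists_walk_length_eq_dist a b
          obtain ⟨hcl1, hcl2⟩ := claim_lemma hconn hstar d a c k p r ga hp hr hga (by omega)
          have e3 : g.getVert (G.dist d a - k) = p.reverse.getVert (G.dist d a - k) := by
            apply hstar a b d g p.reverse hg
            · rw [SimpleGraph.Walk.length_reverse, hp, cAD]
            · apply gp_ge
              omega
          rw [SimpleGraph.Walk.getVert_reverse, hp] at e3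
          have e3' : G.dist d a - (G.dist d a - k) = k := by omega
          rw [e3'] at e3
          have e4 : g.getVert (G.dist d a - k) = ga.getVert (G.dist d a - k) := by
            apply hstar a b c g ga hg hga
            apply gp_ge
            omega
          have key : p.getVert k = r.getVert (k + 1) := by
            rw [← e3, e4, hcl2]
          have dk : G.dist d (p.getVert k) = k := gpkA.1
          have dk1 : G.dist d (r.getVert (k + 1)) = k + 1 :=
            (geodesic_getVert hconn r hr (k + 1) (by omega)).1
          rw [key, dk1] at dk
          omega

theorem stmt1 {V : Type*} [Fintype V] (G : SimpleGraph V) (hconn : G.Connected)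
    (δ : ℝ) (hδ : 0 ≤ δ) (hthin : ThinTriangles G δ) (a b c d : V) :
    (G.dist a b : ℝ) + (G.dist c d : ℝ) ≤
      max ((G.dist a c : ℝ) + (G.dist b d : ℝ)) ((G.dist a d : ℝ) + (G.dist b c : ℝ))
        + 4 * δ := by
  have cBD : G.dist b d = G.dist d b := SimpleGraph.dist_comm
  have cCD : G.dist c d = G.dist d c := SimpleGraph.dist_comm
  have cAD : G.dist a d = G.dist d a := SimpleGraph.dist_comm
  have cBA : G.dist b a = G.dist a b := SimpleGraph.dist_comm
  have cBC : G.dist b c = G.dist c b := SimpleGraph.dist_comm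
  have cAC : G.dist a c = G.dist c a := SimpleGraph.dist_comm
  rcases le_total (G.dist d a + G.dist b c) (G.dist d b + G.dist a c) with hle | hle
  · have h := main_lemma hconn hδ hthin a b c d hle
    rw [cBD, cCD]
    refine le_trans ?_ (add_le_add (le_max_left _ _) (le_refl _))
    linarith
  · have h := main_lemma hconn hδ hthin b a c d (by omega)
    rw [cBA] at h
    rw [cCD, cAD]
    refine le_trans ?_ (add_le_add (le_max_right _ _) (le_refl _))
    linarith
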